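/- The two functions ψ₀(r) = r²/(1+r²)² and ψ̃₀(r) = (r⁴ + 4r² ln r − 1)/(1+r²)² form a fundamental system of solutions of 𝒜₀ψ = 0 on (0,∞), where 𝒜₀f = ∂_r²f − (1/r)∂_r f + (1/r)∂_r(Qf) and Q(r) = 4r²/(1+r²). -/

import Mathlib

open MeasureTheory Filter

noncomputable section

/-- `Q(r) = 4r²/(1+r²)`. -/
def Qprof (r : ℝ) : ℝ := 4*r^2/(1+r^2)

/-- The linearized operator `𝒜₀f = f'' - f'/r + (Qf)'/r`. -/
def A0 (f : ℝ → ℝ) (r : ℝ) : ℝ :=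
  deriv (deriv f) r - deriv f r / r + deriv (fun s => Qprof s * f s) r / r

/-- `ψ₀(r) = r²/(1+r²)²`. -/
def psi0 (r : ℝ) : ℝ := r^2/(1+r^2)^2

/-- `ψ̃₀(r) = (r⁴ + 4r² ln r - 1)/(1+r²)²`. -/
def psit (r : ℝ) : ℝ := (r^4 + 4*r^2*Real.log r - 1)/(1+r^2)^2

namespace FundSys

lemma one_add_sq_ne (r : ℝ) : (1 + r^2) ≠ 0 := by positivity

lemma one_add_sq_pow_ne (r : ℝ) (n : ℕ) : (1 + r^2)^n ≠ 0 := by positivity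

/-- derivative of `(1+r²)^n`. -/
lemma hasDerivAt_base (r : ℝ) (n : ℕ) :
    HasDerivAt (fun s : ℝ => (1 + s^2)^n) ((n:ℝ) * (1 + r^2)^(n-1) * (2*r)) r := by
  have h : HasDerivAt (fun s : ℝ => 1 + s^2) (2*r) r := by
    simpa using (hasDerivAt_pow 2 r).const_add 1
  exact h.pow n

def psi0' (r : ℝ) : ℝ := (2*r - 2*r^3)/(1+r^2)^3

def psit' (r : ℝ) : ℝ := (8*r + 8*r^3 + (8*r - 8*r^3)*Real.log r)/(1+r^2)^3

lemma hasDerivAt_psi0 (r : ℝ) : HasDerivAt psi0 (psi0' r) r := by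
  have hnum : HasDerivAt (fun s : ℝ => s^2) (2*r) r := by simpa using hasDerivAt_pow 2 r
  have h := hnum.div (hasDerivAt_base r 2) (one_add_sq_pow_ne r 2)
  refine h.congr_deriv ?_
  have := one_add_sq_ne r
  unfold psi0'
  field_simp
  ring

lemma hasDerivAt_psit {r : ℝ} (hr : 0 < r) : HasDerivAt psit (psit' r) r := by
  have hlog : HasDerivAt Real.log r⁻¹ r := Real.hasDerivAt_log hr.ne'
  have hnum : HasDerivAt (fun s : ℝ => s^4 + 4*s^2*Real.log s - 1)
      (4*r^3 + (4*(2*r)*Real.log r + 4*r^2*r⁻¹)) r := by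
    have h1 : HasDerivAt (fun s : ℝ => s^4) (4*r^3) r := by simpa using hasDerivAt_pow 4 r
    have h2 : HasDerivAt (fun s : ℝ => 4*s^2) (4*(2*r)) r := by
      simpa using (hasDerivAt_pow 2 r).const_mul 4
    exact ((h1.add (h2.mul hlog)).sub_const 1)
  have h := hnum.div (hasDerivAt_base r 2) (one_add_sq_pow_ne r 2)
  refine h.congr_deriv ?_
  have h1 := one_add_sq_ne r
  unfold psit'
  field_simp
  ring

lemma hasDerivAt_psi0' (r : ℝ) :
    HasDerivAt psi0' ((2 - 16*r^2 + 6*r^4)/(1+r^2)^4) r := by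
  have hnum : HasDerivAt (fun s : ℝ => 2*s - 2*s^3) (2 - 2*(3*r^2)) r := by
    have h1 : HasDerivAt (fun s : ℝ => 2*s) 2 r := by
      simpa using (hasDerivAt_id r).const_mul 2
    have h2 : HasDerivAt (fun s : ℝ => 2*s^3) (2*(3*r^2)) r := by
      simpa using (hasDerivAt_pow 3 r).const_mul 2
    exact h1.sub h2
  have h := hnum.div (hasDerivAt_base r 3) (one_add_sq_pow_ne r 3)
  refine h.congr_deriv ?_
  have h1 := one_add_sq_ne r
  field_simp
  ring

lemma hasDerivAt_psit' {r : ℝ} (hr : 0 < r) :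
    HasDerivAt psit'
      ((16 - 16*r^2 - 32*r^4 + (8 - 64*r^2 + 24*r^4)*Real.log r)/(1+r^2)^4) r := by
  have hlog : HasDerivAt Real.log r⁻¹ r := Real.hasDerivAt_log hr.ne'
  have hnum : HasDerivAt (fun s : ℝ => 8*s + 8*s^3 + (8*s - 8*s^3)*Real.log s)
      ((8 + 8*(3*r^2)) + ((8 - 8*(3*r^2))*Real.log r + (8*r - 8*r^3)*r⁻¹)) r := by
    have h1 : HasDerivAt (fun s : ℝ => 8*s) 8 r := by
      simpa using (hasDerivAt_id r).const_mul 8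
    have h2 : HasDerivAt (fun s : ℝ => 8*s^3) (8*(3*r^2)) r := by
      simpa using (hasDerivAt_pow 3 r).const_mul 8
    have h3 : HasDerivAt (fun s : ℝ => 8*s - 8*s^3) (8 - 8*(3*r^2)) r := h1.sub h2
    exact (h1.add h2).add (h3.mul hlog)
  have h := hnum.div (hasDerivAt_base r 3) (one_add_sq_pow_ne r 3)
  refine h.congr_deriv ?_
  have h1 := one_add_sq_ne r
  have hrne := hr.ne'
  field_simp
  ring

lemma hasDerivAt_Qpsi0 (r : ℝ) :
    HasDerivAt (fun s => Qprof s * psi0 s) ((16*r^3 - 8*r^5)/(1+r^2)^4) r := by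
  have heq : (fun s : ℝ => Qprof s * psi0 s) = fun s => 4*s^4/(1+s^2)^3 := by
    funext s
    have := one_add_sq_ne s
    simp only [Qprof, psi0]
    field_simp
  rw [heq]
  have hnum : HasDerivAt (fun s : ℝ => 4*s^4) (4*(4*r^3)) r := by
    simpa using (hasDerivAt_pow 4 r).const_mul 4
  have h := hnum.div (hasDerivAt_base r 3) (one_add_sq_pow_ne r 3)
  refine h.congr_deriv ?_
  have h1 := one_add_sq_ne r
  field_simp
  ring

lemma hasDerivAt_Qpsit {r : ℝ} (hr : 0 < r) :
    HasDerivAt (fun s => Qprof s * psit s)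
      ((40*r^5 + 32*r^3 - 8*r + (64*r^3 - 32*r^5)*Real.log r)/(1+r^2)^4) r := by
  have heq : (fun s : ℝ => Qprof s * psit s)
      = fun s => (4*s^6 + 16*s^4*Real.log s - 4*s^2)/(1+s^2)^3 := by
    funext s
    have := one_add_sq_ne s
    simp only [Qprof, psit]
    field_simp
    ring
  rw [heq]
  have hlog : HasDerivAt Real.log r⁻¹ r := Real.hasDerivAt_log hr.ne'
  have hnum : HasDerivAt (fun s : ℝ => 4*s^6 + 16*s^4*Real.log s - 4*s^2)
      (4*(6*r^5) + (16*(4*r^3)*Real.log r + 16*r^4*r⁻¹) - 4*(2*r)) r := by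
    have h1 : HasDerivAt (fun s : ℝ => 4*s^6) (4*(6*r^5)) r := by
      simpa using (hasDerivAt_pow 6 r).const_mul 4
    have h2 : HasDerivAt (fun s : ℝ => 16*s^4) (16*(4*r^3)) r := by
      simpa using (hasDerivAt_pow 4 r).const_mul 16
    have h3 : HasDerivAt (fun s : ℝ => 4*s^2) (4*(2*r)) r := by
      simpa using (hasDerivAt_pow 2 r).const_mul 4
    exact (h1.add (h2.mul hlog)).sub h3
  have h := hnum.div (hasDerivAt_base r 3) (one_add_sq_pow_ne r 3)
  refine h.congr_deriv ?_
  have h1 := one_add_sq_ne r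
  have hrne := hr.ne'
  field_simp
  ring

lemma deriv_psi0_eq : deriv psi0 = psi0' := by
  funext r; exact (hasDerivAt_psi0 r).deriv

lemma deriv_psit_eq {r : ℝ} (hr : 0 < r) : deriv psit r = psit' r :=
  (hasDerivAt_psit hr).deriv

lemma deriv_deriv_psit_eq {r : ℝ} (hr : 0 < r) :
    deriv (deriv psit) r
      = (16 - 16*r^2 - 32*r^4 + (8 - 64*r^2 + 24*r^4)*Real.log r)/(1+r^2)^4 := by
  have hEq : deriv psit =ᶠ[nhds r] psit' := by
    filter_upwards [Ioi_mem_nhds hr] with s hs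
    exact deriv_psit_eq hs
  rw [hEq.deriv_eq]
  exact (hasDerivAt_psit' hr).deriv

end FundSys

open FundSys in
/-- `ψ₀` and `ψ̃₀` form a fundamental system of solutions of `𝒜₀ψ = 0` on
`(0,∞)`: both solve the equation and their Wronskian does not vanish. -/
theorem fundamental_system :
    ∀ r : ℝ, 0 < r →
      A0 psi0 r = 0 ∧ A0 psit r = 0 ∧
      psi0 r * deriv psit r - deriv psi0 r * psit r ≠ 0 := by
  intro r hr
  have hrne : r ≠ 0 := hr.ne'
  have h1 := one_add_sq_ne r
  refine ⟨?_, ?_, ?_⟩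
  · rw [A0, deriv_psi0_eq, (hasDerivAt_psi0' r).deriv, (hasDerivAt_Qpsi0 r).deriv]
    unfold psi0'
    field_simp
    ring
  · rw [A0, deriv_deriv_psit_eq hr, deriv_psit_eq hr, (hasDerivAt_Qpsit hr).deriv]
    unfold psit'
    field_simp
    ring
  · rw [deriv_psit_eq hr, deriv_psi0_eq]
    have hW : psi0 r * psit' r - psi0' r * psit r = 2*r/(1+r^2)^2 := by
      unfold psi0 psit psi0' psit'
      field_simp
      ring
    rw [hW]
    positivity

end
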